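/- Low rank approximation: Let A be a compact Hausdorff second-countable abelian group with normalized Haar probability measure μ, let k ≥ 1, let ε > 0, and let F = (f_v)_{v ∈ K_k} be a system of Borel measurable functions on A with ‖f_v‖_∞ ≤ 1 for all v. Then there exist a natural number n ≤ 1 + 4/ε² and rank one functions r₁,…,r_n on A^{k+1} such that the function g = (1/n)·∑_{i=1}^n r_i satisfies ‖g − [F]∘ψ₀‖_{L²(μ^{k+1})} ≤ ε, where ψ₀ : A^{k+1} → A is the projection (x,t₁,…,t_k) ↦ x. -/

import Mathlib

open MeasureTheory
open scoped BigOperators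

/-- The `⋆` operation: conjugate a complex number iff the natural number parameter is odd. -/
noncomputable def cstar (m : ℕ) (z : ℂ) : ℂ := if Even m then z else (starRingEnd ℂ) z

/-- The height `h(v)` of a cube vertex `v ∈ {0,1}^k`: the number of `1` coordinates. -/
def ht {k : ℕ} (v : Fin k → Bool) : ℕ := (Finset.univ.filter (fun i => v i = true)).card

/-- The point `x + v₁t₁ + ⋯ + v_k t_k` of the cube with base `x` and edges `t`. -/
def vertexPoint {A : Type*} [AddCommGroup A] {k : ℕ} (x : A) (t : Fin k → A)
    (v : Fin k → Bool) : A := x + ∑ i, if v i then t i else 0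

/-- The Gowers integral
`G_k(f) = ∫_{A^{k+1}} ∏_{v ∈ {0,1}^k} C^{h(v)} f(x + v₁t₁ + ⋯ + v_k t_k) dμ(x)dμ(t₁)⋯dμ(t_k)`,
so that `‖f‖_{U_k}^{2^k} = G_k(f)`. -/
noncomputable def gowersIntegral {A : Type*} [AddCommGroup A] [MeasurableSpace A]
    (μ : Measure A) (k : ℕ) (f : A → ℂ) : ℂ :=
  ∫ x, ∫ t : Fin k → A, ∏ v : Fin k → Bool, cstar (ht v) (f (vertexPoint x t v))
    ∂(Measure.pi fun _ => μ) ∂μ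


/-- The corner convolution `[F]` of a system `F = (f_v)_{v ∈ K_n}` of functions on `A`. -/
noncomputable def cornerConv {A : Type*} [AddCommGroup A] [MeasurableSpace A]
    (μ : Measure A) (n : ℕ) (F : (Fin n → Bool) → A → ℂ) (x : A) : ℂ :=
  ∫ t : Fin n → A,
    ∏ v ∈ Finset.univ.filter (fun v : Fin n → Bool => v ≠ fun _ => false),
      cstar (ht v) (F v (vertexPoint x t v))
    ∂(Measure.pi fun _ => μ)

/-- The rank one function on `A^{k+1} = A × A^k` associated with a system
`(g_v)_{v ∈ K_k}` of functions on `A`: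
`(x,t₁,…,t_k) ↦ ∏_{v ∈ K_k} C^{h(v)} g_v(x + v₁t₁ + ⋯ + v_k t_k)`. -/
noncomputable def rankOne {A : Type*} [AddCommGroup A] {k : ℕ}
    (G : (Fin k → Bool) → A → ℂ) (p : A × (Fin k → A)) : ℂ :=
  ∏ v ∈ Finset.univ.filter (fun v : Fin k → Bool => v ≠ fun _ => false),
    cstar (ht v) (G v (vertexPoint p.1 p.2 v))



set_option linter.unusedSectionVars false
set_option maxHeartbeats 1000000
open scoped ENNReal

lemma norm_cstar (m : ℕ) (z : ℂ) : ‖cstar m z‖ = ‖z‖ := by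
  unfold cstar; split <;> simp

lemma measurable_cstar (m : ℕ) : Measurable (cstar m) := by
  unfold cstar; split
  · exact measurable_id
  · exact continuous_star.measurable

section grp
variable {A : Type*} [AddCommGroup A] [TopologicalSpace A] [IsTopologicalAddGroup A]
    [SecondCountableTopology A] [MeasurableSpace A] [BorelSpace A] {k : ℕ}

lemma continuous_vertexPoint (v : Fin k → Bool) :
    Continuous (fun p : A × (Fin k → A) => vertexPoint p.1 p.2 v) := by
  unfold vertexPoint
  refine continuous_fst.add (continuous_finset_sum _ (fun i _ => ?_))
  by_cases h : v i
  · simpa [h] using (by fun_prop : Continuous fun p : A × (Fin k → A) => p.2 i)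
  · simpa [h] using (continuous_const : Continuous fun _ : A × (Fin k → A) => (0 : A))

lemma measurable_rankOne {G : (Fin k → Bool) → A → ℂ} (hG : ∀ v, Measurable (G v)) :
    Measurable (rankOne G) := by
  unfold rankOne
  exact Finset.measurable_prod _ fun v _ =>
    (measurable_cstar _).comp ((hG v).comp (continuous_vertexPoint v).measurable)

lemma norm_rankOne_le {G : (Fin k → Bool) → A → ℂ} (hG : ∀ v x, ‖G v x‖ ≤ 1)
    (p : A × (Fin k → A)) : ‖rankOne G p‖ ≤ 1 := by
  unfold rankOne
  rw [norm_prod]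
  exact Finset.prod_le_one (fun v _ => norm_nonneg _)
    (fun v _ => by rw [norm_cstar]; exact hG v _)

lemma cornerConv_eq_integral_rankOne {A : Type*} [AddCommGroup A] [MeasurableSpace A]
    (μ : Measure A) (F : (Fin k → Bool) → A → ℂ) (x : A) :
    cornerConv μ k F x = ∫ t, rankOne F (x, t) ∂(Measure.pi fun _ : Fin k => μ) := rfl

/-- shifted system -/
noncomputable def shiftF (F : (Fin k → Bool) → A → ℂ) (s : Fin k → A) :
    (Fin k → Bool) → A → ℂ :=
  fun v y => F v (y + ∑ i, if v i then s i else 0)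

lemma vertexPoint_add (x : A) (t s : Fin k → A) (v : Fin k → Bool) :
    vertexPoint x t v + ∑ i, (if v i then s i else 0) = vertexPoint x (t + s) v := by
  unfold vertexPoint
  rw [add_assoc, ← Finset.sum_add_distrib]
  congr 1
  refine Finset.sum_congr rfl fun i _ => ?_
  by_cases h : v i <;> simp [h]

lemma rankOne_shiftF (F : (Fin k → Bool) → A → ℂ) (s : Fin k → A) (p : A × (Fin k → A)) :
    rankOne (shiftF F s) p = rankOne F (p.1, p.2 + s) := by
  unfold rankOne shiftF
  exact Finset.prod_congr rfl fun v _ => by rw [vertexPoint_add]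

end grp
open MeasureTheory Complex
open scoped BigOperators

lemma integrable_of_bdd {Ω : Type*} [MeasurableSpace Ω] {P : Measure Ω} [IsFiniteMeasure P]
    {E : Type*} [NormedAddCommGroup E] {f : Ω → E}
    (hf : AEStronglyMeasurable f P) (C : ℝ) (h : ∀ x, ‖f x‖ ≤ C) : Integrable f P :=
  (integrable_const C).mono' hf (Filter.Eventually.of_forall h)

lemma norm_add_sq_complex (z w : ℂ) :
    ‖z + w‖ ^ 2 = ‖z‖ ^ 2 + 2 * (z * (starRingEnd ℂ) w).re + ‖w‖ ^ 2 := by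
  have h : ∀ u : ℂ, ‖u‖ ^ 2 = (u * (starRingEnd ℂ) u).re := by
    intro u
    rw [Complex.mul_conj]
    simp [Complex.sq_norm]
  have e : ((z + w) * (starRingEnd ℂ) (z + w)).re
      = (z * (starRingEnd ℂ) z).re + 2 * (z * (starRingEnd ℂ) w).re
        + (w * (starRingEnd ℂ) w).re := by
    have hwz : (w * (starRingEnd ℂ) z).re = (z * (starRingEnd ℂ) w).re := by
      rw [show w * (starRingEnd ℂ) z = (starRingEnd ℂ) (z * (starRingEnd ℂ) w) by
        simp [map_mul, mul_comm]]
      simp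
    simp only [map_add, add_mul, mul_add, Complex.add_re]
    rw [hwz]; ring
  rw [h, h, h, e]

/-- Key sampling lemma (Maurey-type greedy argument). -/
lemma key_sampling {S Ω : Type*} [MeasurableSpace S] [MeasurableSpace Ω]
    (ν : Measure S) (P : Measure Ω) [IsProbabilityMeasure ν] [IsProbabilityMeasure P]
    (E : S → Ω → ℂ) (hE : Measurable (fun q : S × Ω => E q.1 q.2))
    (hbd : ∀ s p, ‖E s p‖ ≤ 2) (hzero : ∀ p, ∫ s, E s p ∂ν = 0) :
    ∀ n : ℕ, ∃ s : Fin n → S, ∫ p, ‖∑ i, E (s i) p‖ ^ 2 ∂P ≤ 4 * n := by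
  have hEsec : ∀ s, Measurable (fun p => E s p) := fun s =>
    hE.comp (measurable_const.prodMk measurable_id)
  have hEsec' : ∀ p, Measurable (fun s => E s p) := fun p =>
    hE.comp (measurable_id.prodMk measurable_const)
  intro n
  induction n with
  | zero => exact ⟨Fin.elim0, by simp⟩
  | succ n ih =>
    obtain ⟨s, hs⟩ := ih
    set D : Ω → ℂ := fun p => ∑ i, E (s i) p with hD
    have hDmeas : Measurable D := Finset.measurable_sum _ fun i _ => hEsec (s i)
    have hDbd : ∀ p, ‖D p‖ ≤ 2 * n := fun p => by
      calc ‖D p‖ ≤ ∑ i : Fin n, ‖E (s i) p‖ := norm_sum_le _ _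
        _ ≤ ∑ _i : Fin n, 2 := Finset.sum_le_sum fun i _ => hbd _ _
        _ = 2 * n := by simp [mul_comm]
    have hDsqInt : Integrable (fun p => ‖D p‖ ^ 2) P := by
      refine integrable_of_bdd (hDmeas.norm.pow_const 2).aestronglyMeasurable
        ((2 * n) ^ 2) (fun p => ?_)
      rw [Real.norm_of_nonneg (by positivity)]
      exact pow_le_pow_left₀ (norm_nonneg _) (hDbd p) 2
    set H : S × Ω → ℝ := fun q => ‖D q.2 + E q.1 q.2‖ ^ 2 with hH
    have hHmeas : Measurable H :=
      ((hDmeas.comp measurable_snd).add hE).norm.pow_const 2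
    have hHint : Integrable H (ν.prod P) := by
      refine integrable_of_bdd hHmeas.aestronglyMeasurable ((2 * n + 2) ^ 2) (fun q => ?_)
      have h1 : ‖D q.2 + E q.1 q.2‖ ≤ 2 * n + 2 :=
        (norm_add_le _ _).trans (add_le_add (hDbd _) (hbd _ _))
      rw [Real.norm_of_nonneg (by positivity)]
      exact pow_le_pow_left₀ (norm_nonneg _) h1 2
    have hswap : ∫ σ, ∫ p, H (σ, p) ∂P ∂ν = ∫ p, ∫ σ, H (σ, p) ∂ν ∂P :=
      integral_integral_swap (f := fun σ p => H (σ, p)) hHint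
    have hinner : ∀ p, ∫ σ, H (σ, p) ∂ν ≤ ‖D p‖ ^ 2 + 4 := by
      intro p
      have hEp : Integrable (fun σ => E σ p) ν :=
        integrable_of_bdd (hEsec' p).aestronglyMeasurable 2 (fun σ => hbd σ p)
      have hmulInt : Integrable (fun σ => D p * (starRingEnd ℂ) (E σ p)) ν := by
        refine integrable_of_bdd
          ((measurable_const.mul (continuous_star.measurable.comp (hEsec' p)))).aestronglyMeasurable
          (‖D p‖ * 2) (fun σ => ?_)
        rw [norm_mul, RCLike.norm_conj]
        exact mul_le_mul_of_nonneg_left (hbd σ p) (norm_nonneg _)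
      have hcrossInt : Integrable (fun σ => 2 * (D p * (starRingEnd ℂ) (E σ p)).re) ν := by
        have : Integrable (fun σ => (D p * (starRingEnd ℂ) (E σ p)).re) ν := by
          have := integral_re hmulInt
          exact hmulInt.re
        exact this.const_mul 2
      have hsqInt : Integrable (fun σ => ‖E σ p‖ ^ 2) ν :=
        integrable_of_bdd ((hEsec' p).norm.pow_const 2).aestronglyMeasurable 4
          (fun σ => by
            rw [Real.norm_of_nonneg (by positivity)]
            calc ‖E σ p‖ ^ 2 ≤ 2 ^ 2 := pow_le_pow_left₀ (norm_nonneg _) (hbd σ p) 2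
              _ = 4 := by norm_num)
      have hcross0 : ∫ σ, 2 * (D p * (starRingEnd ℂ) (E σ p)).re ∂ν = 0 := by
        rw [show (fun σ => 2 * (D p * (starRingEnd ℂ) (E σ p)).re) = (fun σ => ((2:ℝ) * ((fun σ => (D p * (starRingEnd ℂ) (E σ p)).re) σ))) from rfl, integral_const_mul]
        have h1 : ∫ σ, (D p * (starRingEnd ℂ) (E σ p)).re ∂ν
            = (∫ σ, D p * (starRingEnd ℂ) (E σ p) ∂ν).re := by
          simpa using integral_re hmulInt
        rw [h1, integral_const_mul, integral_conj, hzero p]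
        simp
      have hsplit : ∫ σ, H (σ, p) ∂ν
          = ∫ σ, (‖D p‖ ^ 2 + 2 * (D p * (starRingEnd ℂ) (E σ p)).re + ‖E σ p‖ ^ 2) ∂ν := by
        refine integral_congr_ae (Filter.Eventually.of_forall fun σ => ?_)
        exact norm_add_sq_complex _ _
      have hInt1 : Integrable (fun σ => ‖D p‖ ^ 2 + 2 * (D p * (starRingEnd ℂ) (E σ p)).re) ν :=
        (integrable_const _).add hcrossInt
      have hc : Integrable (fun _ : S => ‖D p‖ ^ 2) ν := integrable_const _
      rw [hsplit, integral_add hInt1 hsqInt, integral_add hc hcrossInt, hcross0, integral_const]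
      have hsq4 : ∫ σ, ‖E σ p‖ ^ 2 ∂ν ≤ 4 := by
        calc ∫ σ, ‖E σ p‖ ^ 2 ∂ν ≤ ∫ _σ, (4:ℝ) ∂ν := by
              refine integral_mono hsqInt (integrable_const _) (fun σ => ?_)
              calc ‖E σ p‖ ^ 2 ≤ 2 ^ 2 := pow_le_pow_left₀ (norm_nonneg _) (hbd σ p) 2
                _ = 4 := by norm_num
          _ = 4 := by simp
      simp only [measure_univ, ENNReal.toReal_one, smul_eq_mul, one_mul, add_zero]
      rw [show ν.real Set.univ = 1 by simp, one_mul]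
      linarith
    have houter : ∫ σ, ∫ p, H (σ, p) ∂P ∂ν ≤ 4 * (n + 1) := by
      rw [hswap]
      have h1 : ∫ p, ∫ σ, H (σ, p) ∂ν ∂P ≤ ∫ p, (‖D p‖ ^ 2 + 4) ∂P := by
        refine integral_mono hHint.integral_prod_right (hDsqInt.add (integrable_const _))
          hinner
      have h2 : ∫ p, (‖D p‖ ^ 2 + 4) ∂P = (∫ p, ‖D p‖ ^ 2 ∂P) + 4 := by
        rw [integral_add hDsqInt (integrable_const _)]; simp
      calc ∫ p, ∫ σ, H (σ, p) ∂ν ∂P ≤ (∫ p, ‖D p‖ ^ 2 ∂P) + 4 := by rw [← h2]; exact h1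
        _ ≤ 4 * n + 4 := by linarith
        _ = 4 * (n + 1) := by ring
    have hφint : Integrable (fun σ => ∫ p, H (σ, p) ∂P) ν := hHint.integral_prod_left
    obtain ⟨σ0, hσ0⟩ := exists_le_integral hφint
    set s' : Fin (n+1) → S := Fin.snoc s σ0 with hs'
    refine ⟨s', ?_⟩
    have hsum : ∀ p, ∑ i : Fin (n+1), E (s' i) p = D p + E σ0 p := by
      intro p
      rw [Fin.sum_univ_castSucc]
      simp [hs', hD]
    calc ∫ p, ‖∑ i : Fin (n+1), E (s' i) p‖ ^ 2 ∂P
        = ∫ p, H (σ0, p) ∂P := by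
          refine integral_congr_ae (Filter.Eventually.of_forall fun p => ?_)
          dsimp only
          rw [hsum p]
      _ ≤ ∫ σ, ∫ p, H (σ, p) ∂P ∂ν := hσ0
      _ ≤ 4 * (n + 1) := houter
      _ = 4 * ((n : ℝ) + 1) := by norm_num
      _ = 4 * ((n + 1 : ℕ) : ℝ) := by push_cast; ring

/-- Low rank approximation: the lift `[F]∘ψ₀` of a corner convolution to
`A^{k+1}` is approximable in `L²` with error `ε` by an average of at most `1 + 4/ε²`
rank one functions. -/
theorem low_rank_approximation
    {A : Type*} [AddCommGroup A] [TopologicalSpace A] [IsTopologicalAddGroup A]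
    [CompactSpace A] [T2Space A] [SecondCountableTopology A]
    [MeasurableSpace A] [BorelSpace A]
    (μ : Measure A) [μ.IsAddHaarMeasure] [IsProbabilityMeasure μ]
    (k : ℕ) (hk : 1 ≤ k) (ε : ℝ) (hε : 0 < ε)
    (F : (Fin k → Bool) → A → ℂ)
    (hmeas : ∀ v, Measurable (F v)) (hbd : ∀ v x, ‖F v x‖ ≤ 1) :
    ∃ n : ℕ, 0 < n ∧ (n : ℝ) ≤ 1 + 4 / ε ^ 2 ∧
      ∃ G : Fin n → (Fin k → Bool) → A → ℂ,
        (∀ i v, Measurable (G i v)) ∧ (∀ i v x, ‖G i v x‖ ≤ 1) ∧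
        eLpNorm
          (fun p : A × (Fin k → A) =>
            (1 / n : ℂ) * (∑ i, rankOne (G i) p) - cornerConv μ k F p.1)
          2 (μ.prod (Measure.pi fun _ => μ))
          ≤ ENNReal.ofReal ε := by
  classical
  set ν : Measure (Fin k → A) := Measure.pi fun _ => μ with hν
  set Pμ : Measure (A × (Fin k → A)) := μ.prod ν with hPμ
  have hrm : Measurable (rankOne F) := measurable_rankOne hmeas
  have hrb : ∀ p, ‖rankOne F p‖ ≤ 1 := norm_rankOne_le hbd
  set f : A → ℂ := cornerConv μ k F with hf
  have hfme : Measurable f := by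
    have : StronglyMeasurable (fun x : A => ∫ t, rankOne F (x, t) ∂ν) :=
      MeasureTheory.StronglyMeasurable.integral_prod_right' hrm.stronglyMeasurable
    exact this.measurable
  have hfbd : ∀ x, ‖f x‖ ≤ 1 := by
    intro x
    rw [hf, cornerConv_eq_integral_rankOne]
    calc ‖∫ t, rankOne F (x, t) ∂ν‖ ≤ 1 * (ν Set.univ).toReal :=
        norm_integral_le_of_norm_le_const (Filter.Eventually.of_forall fun t => hrb (x, t))
      _ = 1 := by simp
  -- the deviation function
  set E : (Fin k → A) → (A × (Fin k → A)) → ℂ :=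
    fun s p => rankOne F (p.1, p.2 + s) - f p.1 with hE
  have hmap : Measurable (fun q : (Fin k → A) × (A × (Fin k → A)) =>
      ((q.2.1, q.2.2 + q.1) : A × (Fin k → A))) := by
    refine (measurable_fst.comp measurable_snd).prodMk ?_
    exact measurable_pi_lambda _ fun i =>
      ((measurable_pi_apply i).comp (measurable_snd.comp measurable_snd)).add
        ((measurable_pi_apply i).comp measurable_fst)
  have hEmeas : Measurable (fun q : (Fin k → A) × (A × (Fin k → A)) => E q.1 q.2) :=
    (hrm.comp hmap).sub (hfme.comp (measurable_fst.comp measurable_snd))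
  have hEbd : ∀ s p, ‖E s p‖ ≤ 2 := by
    intro s p
    calc ‖E s p‖ ≤ ‖rankOne F (p.1, p.2 + s)‖ + ‖f p.1‖ := norm_sub_le _ _
      _ ≤ 1 + 1 := add_le_add (hrb _) (hfbd _)
      _ = 2 := by norm_num
  have hEzero : ∀ p, ∫ s, E s p ∂ν = 0 := by
    rintro ⟨x, t⟩
    have hint : Integrable (fun s => rankOne F (x, t + s)) ν := by
      refine integrable_of_bdd ((hrm.comp ?_)).aestronglyMeasurable 1 (fun s => hrb _)
      exact measurable_const.prodMk
        (measurable_pi_lambda _ fun i => (by fun_prop : Measurable fun c : Fin k → A => t i + c i))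
    rw [hE]
    simp only
    rw [integral_sub hint (integrable_const _), integral_const]
    have hinv : ∫ s, rankOne F (x, t + s) ∂ν = ∫ s, rankOne F (x, s) ∂ν :=
      integral_add_left_eq_self (fun s => rankOne F (x, s)) t
    rw [hinv, ← cornerConv_eq_integral_rankOne, ← hf]
    simp
  -- pick n
  set n : ℕ := ⌈4 / ε ^ 2⌉₊ with hn
  have hnpos : 0 < n := Nat.ceil_pos.mpr (by positivity)
  have hnR : (0:ℝ) < n := by exact_mod_cast hnpos
  have hnle : (n : ℝ) ≤ 1 + 4 / ε ^ 2 := by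
    have := (Nat.ceil_lt_add_one (by positivity : (0:ℝ) ≤ 4 / ε ^ 2)).le
    linarith
  have hn4 : 4 / (n : ℝ) ≤ ε ^ 2 := by
    have h1 : 4 / ε ^ 2 ≤ (n : ℝ) := Nat.le_ceil _
    rw [div_le_iff₀ hnR]
    rw [div_le_iff₀ (by positivity : (0:ℝ) < ε ^ 2)] at h1
    linarith [h1]
  obtain ⟨s, hs⟩ := key_sampling ν Pμ E hEmeas hEbd hEzero n
  refine ⟨n, hnpos, hnle, fun i => shiftF F (s i), ?_, ?_, ?_⟩
  · intro i v
    exact (hmeas v).comp (continuous_add_right _).measurable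
  · intro i v x
    exact hbd v _
  -- the L² bound
  have hkey : ∀ p : A × (Fin k → A),
      (1 / n : ℂ) * (∑ i, rankOne (shiftF F (s i)) p) - f p.1
        = (1 / n : ℂ) * ∑ i, E (s i) p := by
    intro p
    have h1 : ∀ i : Fin n, rankOne (shiftF F (s i)) p = E (s i) p + f p.1 := by
      intro i
      rw [rankOne_shiftF, hE]
      ring_nf
      try simp
    simp only [h1, Finset.sum_add_distrib, Finset.sum_const, Finset.card_univ,
      Fintype.card_fin, nsmul_eq_mul]
    have hne : (n : ℂ) ≠ 0 := by exact_mod_cast hnpos.ne'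
    field_simp
    try ring
  set u : A × (Fin k → A) → ℂ :=
    fun p => (1 / n : ℂ) * (∑ i, rankOne (shiftF F (s i)) p) - f p.1 with hu
  have humeas : Measurable u := by
    refine (measurable_const.mul (Finset.measurable_sum _ fun i _ => ?_)).sub
      (hfme.comp measurable_fst)
    exact measurable_rankOne (fun v => (hmeas v).comp (continuous_add_right _).measurable)
  have hubd : ∀ p, ‖u p‖ ≤ 2 := by
    intro p
    rw [hu]
    simp only
    rw [hkey p, norm_mul]
    have h1 : ‖∑ i : Fin n, E (s i) p‖ ≤ 2 * n := by
      calc ‖∑ i : Fin n, E (s i) p‖ ≤ ∑ i : Fin n, ‖E (s i) p‖ := norm_sum_le _ _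
        _ ≤ ∑ _i : Fin n, 2 := Finset.sum_le_sum fun i _ => hEbd _ _
        _ = 2 * n := by simp [mul_comm]
    have h2 : ‖(1 / n : ℂ)‖ = 1 / n := by
      rw [norm_div, norm_one, Complex.norm_natCast]
    rw [h2]
    calc (1 / (n:ℝ)) * ‖∑ i : Fin n, E (s i) p‖ ≤ (1 / n) * (2 * n) := by
          exact mul_le_mul_of_nonneg_left h1 (by positivity)
      _ = 2 := by field_simp
  have humem : MemLp u 2 Pμ :=
    MemLp.of_bound humeas.aestronglyMeasurable 2 (Filter.Eventually.of_forall hubd)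
  have hintsq : ∫ p, ‖u p‖ ^ 2 ∂Pμ ≤ ε ^ 2 := by
    have h1 : ∀ p, ‖u p‖ ^ 2 = (1 / n : ℝ) ^ 2 * ‖∑ i, E (s i) p‖ ^ 2 := by
      intro p
      rw [hu]; simp only
      rw [hkey p, norm_mul, mul_pow]
      congr 2
      rw [norm_div, norm_one, Complex.norm_natCast]
    calc ∫ p, ‖u p‖ ^ 2 ∂Pμ = ∫ p, (1 / n : ℝ) ^ 2 * ‖∑ i, E (s i) p‖ ^ 2 ∂Pμ := by
          exact integral_congr_ae (Filter.Eventually.of_forall h1)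
      _ = (1 / n : ℝ) ^ 2 * ∫ p, ‖∑ i, E (s i) p‖ ^ 2 ∂Pμ := by
          rw [integral_const_mul]
      _ ≤ (1 / n : ℝ) ^ 2 * (4 * n) := by
          refine mul_le_mul_of_nonneg_left hs (by positivity)
      _ = 4 / n := by field_simp
      _ ≤ ε ^ 2 := hn4
  have hfinal : eLpNorm u 2 Pμ ≤ ENNReal.ofReal ε := by
    rw [humem.eLpNorm_eq_integral_rpow_norm (by norm_num) (by norm_num)]
    refine ENNReal.ofReal_le_ofReal ?_
    have htr : (2 : ℝ≥0∞).toReal = 2 := by norm_num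
    rw [htr]
    have hnn : 0 ≤ ∫ p, ‖u p‖ ^ (2:ℝ) ∂Pμ := by
      refine integral_nonneg fun p => ?_
      positivity
    have hconv : ∫ p, ‖u p‖ ^ (2:ℝ) ∂Pμ = ∫ p, ‖u p‖ ^ 2 ∂Pμ := by
      refine integral_congr_ae (Filter.Eventually.of_forall fun p => ?_)
      dsimp only
      rw [show ((2:ℝ)) = ((2:ℕ):ℝ) by norm_num, Real.rpow_natCast]
    calc (∫ p, ‖u p‖ ^ (2:ℝ) ∂Pμ) ^ (2:ℝ)⁻¹ ≤ (ε ^ 2) ^ (2:ℝ)⁻¹ := by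
          refine Real.rpow_le_rpow hnn ?_ (by norm_num)
          rw [hconv]; exact hintsq
      _ = ε := by
          rw [← Real.rpow_natCast ε 2, ← Real.rpow_mul hε.le]
          norm_num
  exact hfinal
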